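/- Consider a β-Ginibre point process where the squared distances from the origin to points X_i, i ∈ ℕ, are independent with Y_i ~ Gamma(i, c/β), and where no point selection occurs (no beamforming). The mean of the total received power E[∑_{i∈ℕ} β P̄_r(Y_i) 1_{r_e² ≤ Y_i ≤ τ²}] equals (2c/(α−2)) (P̄_r(r_e²)(r_e² + z²) − P̄_r(τ²)(τ² + z²)), where P̄_r(u) = P_t κ^{-1}(u + z²)^{-α/2} and c = πλ. In particular this mean is the same as for a homogeneous PPP of intensity λ and is independent of β. -/

import Mathlib

open MeasureTheory ProbabilityTheory

lemma gamma_tsum_pdf_aux {θ : ℝ} (hθ : 0 < θ) {u : ℝ} (hu : 0 ≤ u) :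
    ∑' i : ℕ, gammaPDF (↑(i + 1) : ℝ) θ u = ENNReal.ofReal θ := by
  have hterm : ∀ i : ℕ, gammaPDFReal (↑(i + 1) : ℝ) θ u
      = (θ * Real.exp (-(θ * u))) * ((θ * u) ^ i / (Nat.factorial i)) := by
    intro i
    rw [gammaPDFReal, if_pos hu]
    have h1 : ((↑(i + 1) : ℝ)) - 1 = (i : ℕ) := by push_cast; ring
    have h2 : Real.Gamma (↑(i + 1) : ℝ) = ((Nat.factorial i) : ℝ) := by
      exact_mod_cast Real.Gamma_nat_eq_factorial i
    rw [h1, Real.rpow_natCast θ (i + 1), Real.rpow_natCast u i, h2, mul_pow, pow_succ]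
    have h4 : ((Nat.factorial i) : ℝ) ≠ 0 := Nat.cast_ne_zero.mpr i.factorial_ne_zero
    field_simp
  have hsum : Summable (fun i : ℕ => gammaPDFReal (↑(i + 1) : ℝ) θ u) := by
    simp_rw [hterm]
    exact (Real.summable_pow_div_factorial (θ * u)).mul_left _
  have hnn : ∀ i : ℕ, 0 ≤ gammaPDFReal (↑(i + 1) : ℝ) θ u := fun i =>
    gammaPDFReal_nonneg (by positivity) hθ u
  have : ∑' i : ℕ, gammaPDF (↑(i + 1) : ℝ) θ u
      = ENNReal.ofReal (∑' i : ℕ, gammaPDFReal (↑(i + 1) : ℝ) θ u) :=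
    (ENNReal.ofReal_tsum_of_nonneg hnn hsum).symm
  rw [this]
  congr 1
  simp_rw [hterm]
  rw [tsum_mul_left]
  have hexp : ∑' i : ℕ, (θ * u) ^ i / ((Nat.factorial i) : ℝ) = Real.exp (θ * u) := by
    rw [Real.exp_eq_exp_ℝ, NormedSpace.exp_eq_tsum_div]
  rw [hexp, mul_assoc, ← Real.exp_add]
  simp

/-- Mean total received power in a β-Ginibre network without beamforming:
with squared distances `Y i ~ Gamma(i, πλ/β)` independent, the mean of
`∑_i β P̄(Y_i) 1_{r_e² ≤ Y_i ≤ τ²}` equals the homogeneous-PPP value,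
independently of `β`. -/
theorem beta_ginibre_mean_power_no_bf {Ω : Type*} [MeasureSpace Ω]
    [IsProbabilityMeasure (ℙ : Measure Ω)]
    (lam β Pt κ z α re τ : ℝ) (hlam : 0 < lam) (hβ0 : 0 < β) (hβ1 : β ≤ 1)
    (hPt : 0 < Pt) (hκ : 0 < κ) (hz : 0 < z) (hα : 2 < α)
    (hre : 0 ≤ re) (hrτ : re ≤ τ)
    (Y : ℕ → Ω → ℝ) (hYm : ∀ i, Measurable (Y i))
    (hY : ∀ i, 1 ≤ i → Measure.map (Y i) ℙ = gammaMeasure i (Real.pi * lam / β))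
    (hindep : iIndepFun Y ℙ) :
    (∫ ω, (∑' i : ℕ,
        β * (Pt * κ⁻¹ * (Y (i + 1) ω + z ^ 2) ^ (-(α / 2))) *
          Set.indicator (Set.Icc (re ^ 2) (τ ^ 2)) (fun _ => (1 : ℝ)) (Y (i + 1) ω)) ∂ℙ) =
      (2 * (Real.pi * lam) / (α - 2)) *
        (Pt * κ⁻¹ * (re ^ 2 + z ^ 2) ^ (-(α / 2)) * (re ^ 2 + z ^ 2)
          - Pt * κ⁻¹ * (τ ^ 2 + z ^ 2) ^ (-(α / 2)) * (τ ^ 2 + z ^ 2)) := by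
  have hπ : 0 < Real.pi * lam := mul_pos Real.pi_pos hlam
  have hθ : 0 < Real.pi * lam / β := div_pos hπ hβ0
  set θ : ℝ := Real.pi * lam / β with hθdef
  have hre2 : (0:ℝ) ≤ re ^ 2 := by positivity
  have hreτ2 : re ^ 2 ≤ τ ^ 2 := by nlinarith
  have ha' : (0:ℝ) < re ^ 2 + z ^ 2 := by positivity
  have hb' : (0:ℝ) < τ ^ 2 + z ^ 2 := by nlinarith
  set s : Set ℝ := Set.Icc (re ^ 2) (τ ^ 2) with hsdef
  set g : ℝ → ℝ := fun u => β * (Pt * κ⁻¹ * (u + z ^ 2) ^ (-(α / 2))) *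
      Set.indicator s (fun _ => (1:ℝ)) u with hgdef
  -- measurability
  have hX : Measurable fun u : ℝ => (u + z ^ 2) ^ (-(α / 2)) :=
    (measurable_id.add_const _).pow_const _
  have hmg : Measurable g :=
    ((hX.const_mul (Pt * κ⁻¹)).const_mul β).mul
      (measurable_const.indicator measurableSet_Icc)
  have hg0 : ∀ u, 0 ≤ g u := by
    intro u
    by_cases hu : u ∈ s
    · have hbase : (0:ℝ) ≤ u + z ^ 2 := by
        have := hu.1; nlinarith
      have h1 : (0:ℝ) ≤ (u + z ^ 2) ^ (-(α / 2)) := Real.rpow_nonneg hbase _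
      have h2 : (0:ℝ) ≤ β * (Pt * κ⁻¹ * (u + z ^ 2) ^ (-(α / 2))) :=
        mul_nonneg hβ0.le (mul_nonneg (by positivity) h1)
      exact mul_nonneg h2 (Set.indicator_nonneg (fun _ _ => zero_le_one) u)
    · simp [hgdef, Set.indicator_of_notMem hu]
  have hgE : Measurable fun u => ENNReal.ofReal (g u) := ENNReal.measurable_ofReal.comp hmg
  have hpdfm : ∀ i : ℕ, Measurable (gammaPDF (↑(i + 1) : ℝ) θ) := fun i =>
    ENNReal.measurable_ofReal.comp (measurable_gammaPDFReal _ _)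
  -- per-term lintegral
  have hstep1 : ∀ i : ℕ, (∫⁻ ω, ENNReal.ofReal (g (Y (i + 1) ω)) ∂ℙ)
      = ∫⁻ u, gammaPDF (↑(i + 1) : ℝ) θ u * ENNReal.ofReal (g u) ∂volume := by
    intro i
    rw [← lintegral_map hgE (hYm (i + 1)), hY (i + 1) (Nat.le_add_left 1 i), gammaMeasure,
      lintegral_withDensity_eq_lintegral_mul _ (hpdfm i) hgE]
    rfl
  -- the integrand function on ℝ
  set f₀ : ℝ → ℝ := fun u => θ * β * (Pt * κ⁻¹) * (u + z ^ 2) ^ (-(α / 2)) with hf₀def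
  have hind : (fun u => θ * g u) = Set.indicator s f₀ := by
    funext u
    by_cases hu : u ∈ s
    · simp only [hgdef, hf₀def, Set.indicator_of_mem hu]
      ring
    · simp [hgdef, hf₀def, Set.indicator_of_notMem hu]
  have hcont : ContinuousOn f₀ s :=
    continuousOn_const.mul (ContinuousOn.rpow_const
      ((continuous_id.add continuous_const).continuousOn)
      (fun x hx => Or.inl (ne_of_gt (by nlinarith [hx.1]))))
  have hint : Integrable (fun u => θ * g u) volume := by
    rw [hind]
    exact (hcont.integrableOn_compact isCompact_Icc).integrable_indicator measurableSet_Icc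
  -- value of the real integral
  have hR : (∫ u, θ * g u ∂volume) =
      (2 * (Real.pi * lam) / (α - 2)) *
        (Pt * κ⁻¹ * (re ^ 2 + z ^ 2) ^ (-(α / 2)) * (re ^ 2 + z ^ 2)
          - Pt * κ⁻¹ * (τ ^ 2 + z ^ 2) ^ (-(α / 2)) * (τ ^ 2 + z ^ 2)) := by
    rw [hind, integral_indicator measurableSet_Icc,
      MeasureTheory.integral_Icc_eq_integral_Ioc,
      ← intervalIntegral.integral_of_le hreτ2]
    have : (∫ u in (re ^ 2)..(τ ^ 2), f₀ u)
        = (θ * β * (Pt * κ⁻¹)) * ∫ u in (re ^ 2)..(τ ^ 2), (u + z ^ 2) ^ (-(α / 2)) := by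
      rw [hf₀def, intervalIntegral.integral_const_mul]
    rw [this]
    have hcomp : (∫ u in (re ^ 2)..(τ ^ 2), (u + z ^ 2) ^ (-(α / 2)))
        = ∫ u in (re ^ 2 + z ^ 2)..(τ ^ 2 + z ^ 2), u ^ (-(α / 2)) :=
      intervalIntegral.integral_comp_add_right (fun x => x ^ (-(α / 2))) (z ^ 2)
    rw [hcomp]
    have hrne : -(α / 2) ≠ -1 := by
      intro h
      have : α = 2 := by linarith [neg_injective h]
      linarith
    have h0 : (0:ℝ) ∉ Set.uIcc (re ^ 2 + z ^ 2) (τ ^ 2 + z ^ 2) :=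
      Set.notMem_uIcc_of_lt ha' hb'
    rw [integral_rpow (Or.inr ⟨hrne, h0⟩)]
    have hθβ : θ * β = Real.pi * lam := div_mul_cancel₀ _ hβ0.ne'
    have e1 : (re ^ 2 + z ^ 2) ^ (-(α / 2) + 1)
        = (re ^ 2 + z ^ 2) ^ (-(α / 2)) * (re ^ 2 + z ^ 2) :=
      Real.rpow_add_one ha'.ne' _
    have e2 : (τ ^ 2 + z ^ 2) ^ (-(α / 2) + 1)
        = (τ ^ 2 + z ^ 2) ^ (-(α / 2)) * (τ ^ 2 + z ^ 2) :=
      Real.rpow_add_one hb'.ne' _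
    have hα2 : α - 2 ≠ 0 := by linarith
    have hαn : -(α / 2) + 1 ≠ 0 := by
      intro h; apply hα2; linarith
    rw [e1, e2, hθβ]
    have key2 : ∀ (K A B a' b' : ℝ),
        Real.pi * lam * (Pt * K) * ((B * b' - A * a') / (-(α / 2) + 1))
          = 2 * (Real.pi * lam) / (α - 2) * (Pt * K * A * a' - Pt * K * B * b') := by
      intro K A B a' b'
      have hstep : (B * b' - A * a') / (-(α / 2) + 1) = (A * a' - B * b') * (2 / (α - 2)) := by
        rw [div_eq_iff hαn]
        field_simp [hα2]
        ring
      rw [hstep]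
      ring
    exact key2 κ⁻¹ _ _ _ _
  have hR0 : (0:ℝ) ≤ ∫ u, θ * g u ∂volume :=
    integral_nonneg fun u => mul_nonneg hθ.le (hg0 u)
  -- main lintegral computation
  have hA : (∫⁻ ω, ∑' i : ℕ, ENNReal.ofReal (g (Y (i + 1) ω)) ∂ℙ)
      = ENNReal.ofReal (∫ u, θ * g u ∂volume) := by
    rw [lintegral_tsum (f := fun (i : ℕ) ω => ENNReal.ofReal (g (Y (i + 1) ω)))
      fun i => (hgE.comp (hYm (i + 1))).aemeasurable]
    calc ∑' i : ℕ, ∫⁻ ω, ENNReal.ofReal (g (Y (i + 1) ω)) ∂ℙ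
        = ∑' i : ℕ, ∫⁻ u, gammaPDF (↑(i + 1) : ℝ) θ u * ENNReal.ofReal (g u) ∂volume :=
          tsum_congr hstep1
      _ = ∫⁻ u, ∑' i : ℕ, gammaPDF (↑(i + 1) : ℝ) θ u * ENNReal.ofReal (g u) ∂volume :=
          (lintegral_tsum fun i => ((hpdfm i).mul hgE).aemeasurable).symm
      _ = ∫⁻ u, ENNReal.ofReal (θ * g u) ∂volume := by
          apply lintegral_congr
          intro u
          rw [ENNReal.tsum_mul_right]
          by_cases hu : 0 ≤ u
          · rw [gamma_tsum_pdf_aux hθ hu, ← ENNReal.ofReal_mul hθ.le]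
          · have hus : u ∉ s := fun h => hu (le_trans hre2 h.1)
            have hgu : g u = 0 := by simp [hgdef, Set.indicator_of_notMem hus]
            simp [hgu]
      _ = ENNReal.ofReal (∫ u, θ * g u ∂volume) :=
          (MeasureTheory.ofReal_integral_eq_lintegral_ofReal hint
            (ae_of_all _ fun u => mul_nonneg hθ.le (hg0 u))).symm
  have hFmeas : Measurable fun ω => ∑' i : ℕ, ENNReal.ofReal (g (Y (i + 1) ω)) :=
    Measurable.ennreal_tsum fun i => hgE.comp (hYm (i + 1))
  have hfin : (∫⁻ ω, ∑' i : ℕ, ENNReal.ofReal (g (Y (i + 1) ω)) ∂ℙ) ≠ ⊤ := by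
    rw [hA]; exact ENNReal.ofReal_ne_top
  have haesum : ∀ᵐ ω ∂(ℙ : Measure Ω), Summable fun i : ℕ => g (Y (i + 1) ω) := by
    filter_upwards [ae_lt_top hFmeas hfin] with ω hω
    have h1 := ENNReal.summable_toReal hω.ne
    exact h1.congr fun i => ENNReal.toReal_ofReal (hg0 _)
  have haeeq : (fun ω => ENNReal.ofReal (∑' i : ℕ, g (Y (i + 1) ω)))
      =ᵐ[(ℙ : Measure Ω)] fun ω => ∑' i : ℕ, ENNReal.ofReal (g (Y (i + 1) ω)) := by
    filter_upwards [haesum] with ω hω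
    exact ENNReal.ofReal_tsum_of_nonneg (fun i => hg0 _) hω
  have hFsm : AEStronglyMeasurable (fun ω => ∑' i : ℕ, g (Y (i + 1) ω)) (ℙ : Measure Ω) := by
    apply (hFmeas.ennreal_toReal.stronglyMeasurable.aestronglyMeasurable).congr
    filter_upwards [haeeq] with ω hω
    rw [← hω, ENNReal.toReal_ofReal (tsum_nonneg fun i => hg0 _)]
  have key : (∫ ω, (∑' i : ℕ, g (Y (i + 1) ω)) ∂ℙ) =
      (2 * (Real.pi * lam) / (α - 2)) *
        (Pt * κ⁻¹ * (re ^ 2 + z ^ 2) ^ (-(α / 2)) * (re ^ 2 + z ^ 2)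
          - Pt * κ⁻¹ * (τ ^ 2 + z ^ 2) ^ (-(α / 2)) * (τ ^ 2 + z ^ 2)) := by
    rw [MeasureTheory.integral_eq_lintegral_of_nonneg_ae
      (ae_of_all _ fun ω => tsum_nonneg fun i => hg0 _) hFsm,
      lintegral_congr_ae haeeq, hA, ENNReal.toReal_ofReal hR0, hR]
  exact key
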